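/- arXiv:2209.01052 — 2 statements merged into one kernel-verified Lean document; each statement's English description precedes it below -/
import Mathlib

section
/- Let C be a finite nonempty index set, n a positive natural number, and for each t ∈ C let S_t ⊆ {σ : Fin n → ℝ | σ ≥ 0} be a nonempty set (the feasible uncertainties for object t) that is upward closed: σ ∈ S_t and σ' ≥ σ implies σ' ∈ S_t. For each t, let σ^t be a minimizer of the Euclidean norm over S_t, define σ̂_i = max_t σ^t_i, and let P = inf { ‖σ‖ : σ ∈ ⋂_t S_t }. Then (1/√n) · ‖σ̂‖ ≤ P ≤ ‖σ̂‖. -/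
/-- The Euclidean norm of a vector in `ℝ^n`. -/
noncomputable def e2norm {n : ℕ} (σ : Fin n → ℝ) : ℝ := Real.sqrt (∑ i, σ i ^ 2)

/-- Theorem 2 of the paper, abstractly: bounds on the proximity to equitable
efficiency in terms of the componentwise maximum of per-object minimizers. -/
theorem proximity_bounds {ι : Type*} {n : ℕ} (hn : 0 < n)
    (C : Finset ι) (hC : C.Nonempty)
    (S : ι → Set (Fin n → ℝ))
    (hnng : ∀ t ∈ C, ∀ σ ∈ S t, 0 ≤ σ)
    (hne : ∀ t ∈ C, (S t).Nonempty)
    (hup : ∀ t ∈ C, ∀ σ ∈ S t, ∀ σ' : Fin n → ℝ, σ ≤ σ' → σ' ∈ S t)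
    (σm : ι → Fin n → ℝ)
    (hmem : ∀ t ∈ C, σm t ∈ S t)
    (hmin : ∀ t ∈ C, ∀ σ ∈ S t, e2norm (σm t) ≤ e2norm σ) :
    (1 / Real.sqrt n) * e2norm (fun i => C.sup' hC fun t => σm t i) ≤
        sInf {r : ℝ | ∃ σ : Fin n → ℝ, (∀ t ∈ C, σ ∈ S t) ∧ r = e2norm σ} ∧
      sInf {r : ℝ | ∃ σ : Fin n → ℝ, (∀ t ∈ C, σ ∈ S t) ∧ r = e2norm σ} ≤
        e2norm (fun i => C.sup' hC fun t => σm t i) := by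
  set σh : Fin n → ℝ := fun i => C.sup' hC fun t => σm t i with hσh
  have hσh_mem : ∀ t ∈ C, σh ∈ S t := by
    intro t ht
    exact hup t ht (σm t) (hmem t ht) σh (fun i => Finset.le_sup' (fun t => σm t i) ht)
  have hTne : ({r : ℝ | ∃ σ : Fin n → ℝ, (∀ t ∈ C, σ ∈ S t) ∧ r = e2norm σ}).Nonempty :=
    ⟨e2norm σh, σh, hσh_mem, rfl⟩
  have hbdd : BddBelow {r : ℝ | ∃ σ : Fin n → ℝ, (∀ t ∈ C, σ ∈ S t) ∧ r = e2norm σ} := by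
    refine ⟨0, ?_⟩
    rintro r ⟨σ, -, rfl⟩
    exact Real.sqrt_nonneg _
  have hsqrtn : (0 : ℝ) < Real.sqrt n := Real.sqrt_pos.mpr (by exact_mod_cast hn)
  constructor
  · apply le_csInf hTne
    rintro r ⟨σ, hσ, rfl⟩
    rw [one_div, inv_mul_le_iff₀ hsqrtn]
    -- e2norm σh ≤ √n * e2norm σ
    have hkey : ∑ i, σh i ^ 2 ≤ (n : ℝ) * ∑ j, σ j ^ 2 := by
      have hstep : ∀ i : Fin n, σh i ^ 2 ≤ ∑ j, σ j ^ 2 := by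
        intro i
        obtain ⟨t, ht, hti⟩ := Finset.exists_mem_eq_sup' hC (fun t => σm t i)
        have h1 : σh i ^ 2 ≤ ∑ j, σm t j ^ 2 := by
          rw [hσh]
          simp only []
          rw [hti]
          exact Finset.single_le_sum (fun j _ => sq_nonneg (σm t j)) (Finset.mem_univ i)
        have h2 : ∑ j, σm t j ^ 2 ≤ ∑ j, σ j ^ 2 := by
          have := hmin t ht σ (hσ t ht)
          unfold e2norm at this
          have hnn : (0:ℝ) ≤ ∑ j, σ j ^ 2 :=
            Finset.sum_nonneg fun j _ => sq_nonneg _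
          exact (Real.sqrt_le_sqrt_iff hnn).mp this
        linarith
      calc ∑ i, σh i ^ 2 ≤ ∑ _i : Fin n, ∑ j, σ j ^ 2 :=
            Finset.sum_le_sum fun i _ => hstep i
        _ = (n : ℝ) * ∑ j, σ j ^ 2 := by
            rw [Finset.sum_const, Finset.card_univ, Fintype.card_fin, nsmul_eq_mul]
    unfold e2norm
    calc Real.sqrt (∑ i, σh i ^ 2) ≤ Real.sqrt ((n : ℝ) * ∑ j, σ j ^ 2) :=
          Real.sqrt_le_sqrt hkey
      _ = Real.sqrt n * Real.sqrt (∑ j, σ j ^ 2) :=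
          Real.sqrt_mul (by positivity) _
  · exact csInf_le hbdd ⟨σh, hσh_mem, rfl⟩
end

section
/- Let R be a real m × n matrix with full column rank, and let σ̂ > 0, c > 0 be reals with c ≥ σ̂ · ‖R⁺‖ · √n, where R⁺ is the Moore–Penrose pseudoinverse and ‖·‖ the operator 2-norm. Then the set {σ̂ · uᵀ : u ∈ ℝ^n, ‖u‖_∞ ≤ 1} (row vectors of ∞-norm at most σ̂) is contained in the set {c · uᵀ R : u ∈ ℝ^m, ‖u‖₂ ≤ 1}. -/
/-- The Moore–Penrose pseudoinverse of a full-column-rank real matrix. -/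
noncomputable def pinv {m n : ℕ} (A : Matrix (Fin m) (Fin n) ℝ) :
    Matrix (Fin n) (Fin m) ℝ := (A.transpose * A)⁻¹ * A.transpose

/-- The operator 2-norm of a real matrix. -/
noncomputable def opNorm2 {m n : ℕ} (A : Matrix (Fin m) (Fin n) ℝ) : ℝ :=
  ‖LinearMap.toContinuousLinearMap (Matrix.toEuclideanLin A)‖

open Matrix
open scoped Matrix.Norms.L2Operator

lemma e2norm_eq {n : ℕ} (x : Fin n → ℝ) :
    e2norm x = ‖(EuclideanSpace.equiv (Fin n) ℝ).symm x‖ := by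
  simp [e2norm, EuclideanSpace.norm_eq, Real.norm_eq_abs, sq_abs]

lemma opNorm2_eq {m n : ℕ} (A : Matrix (Fin m) (Fin n) ℝ) : opNorm2 A = ‖A‖ := rfl

lemma e2norm_smul {n : ℕ} (a : ℝ) (x : Fin n → ℝ) :
    e2norm (a • x) = |a| * e2norm x := by
  simp only [e2norm, Pi.smul_apply, smul_eq_mul, mul_pow, ← Finset.mul_sum]
  rw [Real.sqrt_mul (sq_nonneg a), Real.sqrt_sq_eq_abs]

lemma e2norm_mulVec_le {m n : ℕ} (A : Matrix (Fin m) (Fin n) ℝ) (x : Fin n → ℝ) :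
    e2norm (A.mulVec x) ≤ opNorm2 A * e2norm x := by
  rw [e2norm_eq, e2norm_eq, opNorm2_eq]
  exact A.l2_opNorm_mulVec ((EuclideanSpace.equiv (Fin n) ℝ).symm x)

lemma opNorm2_transpose {m n : ℕ} (A : Matrix (Fin m) (Fin n) ℝ) :
    opNorm2 A.transpose = opNorm2 A := by
  rw [opNorm2_eq, opNorm2_eq, ← Matrix.conjTranspose_eq_transpose_of_trivial,
    Matrix.l2_opNorm_conjTranspose]

/-- The box uncertainty set `{σ̂ u : ‖u‖_∞ ≤ 1}` is contained in the
ellipsoidal uncertainty set `{c uᵀ R : ‖u‖₂ ≤ 1}` whenever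
`c ≥ σ̂ ‖R⁺‖ √n`. -/
theorem box_subset_ellipsoid {m n : ℕ}
    (R : Matrix (Fin m) (Fin n) ℝ) (hrank : R.rank = n)
    (σhat c : ℝ) (hσ : 0 < σhat) (hc : 0 < c)
    (hscale : σhat * opNorm2 (pinv R) * Real.sqrt n ≤ c) :
    {w : Fin n → ℝ | ∃ u : Fin n → ℝ, (∀ i, |u i| ≤ 1) ∧ w = σhat • u} ⊆
      {w : Fin n → ℝ | ∃ u : Fin m → ℝ, e2norm u ≤ 1 ∧
        w = c • Matrix.vecMul u R} := by
  -- RᵀR is invertible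
  have hrk : (Rᵀ * R).rank = Fintype.card (Fin n) := by
    rw [Matrix.rank_transpose_mul_self, hrank, Fintype.card_fin]
  have hunit : IsUnit (Rᵀ * R) := by
    rw [← Matrix.mulVec_surjective_iff_isUnit]
    have : LinearMap.range (Rᵀ * R).mulVecLin = ⊤ := by
      apply Submodule.eq_top_of_finrank_eq
      rw [← Matrix.rank, hrk]
      simp [Module.finrank_fintype_fun_eq_card]
    intro y
    have : y ∈ LinearMap.range (Rᵀ * R).mulVecLin := this ▸ Submodule.mem_top
    obtain ⟨x, hx⟩ := this
    exact ⟨x, hx⟩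
  have hpinv : pinv R * R = 1 := by
    rw [pinv, Matrix.mul_assoc, Matrix.nonsing_inv_mul _ ((Matrix.isUnit_iff_isUnit_det _).mp hunit)]
  intro w hwmem
  obtain ⟨u, hu, hw⟩ := hwmem
  refine ⟨c⁻¹ • Matrix.vecMul w (pinv R), ?_, ?_⟩
  · -- norm bound
    have h1 : e2norm u ≤ Real.sqrt n := by
      rw [e2norm]
      have : (∑ i, u i ^ 2) ≤ ∑ _i : Fin n, (1:ℝ) := by
        apply Finset.sum_le_sum
        intro i _
        calc u i ^ 2 = |u i| ^ 2 := (sq_abs _).symm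
          _ ≤ 1 ^ 2 := pow_le_pow_left₀ (abs_nonneg _) (hu i) 2
          _ = 1 := one_pow 2
      calc Real.sqrt (∑ i, u i ^ 2) ≤ Real.sqrt (∑ _i : Fin n, (1:ℝ)) :=
            Real.sqrt_le_sqrt this
        _ = Real.sqrt n := by simp
    have h2 : e2norm w ≤ σhat * Real.sqrt n := by
      rw [hw, e2norm_smul, abs_of_pos hσ]
      exact mul_le_mul_of_nonneg_left h1 hσ.le
    have h3 : e2norm (Matrix.vecMul w (pinv R)) ≤ opNorm2 (pinv R) * (σhat * Real.sqrt n) := by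
      have := e2norm_mulVec_le (pinv R)ᵀ w
      rw [Matrix.mulVec_transpose, opNorm2_transpose] at this
      refine this.trans ?_
      have hop : (0:ℝ) ≤ opNorm2 (pinv R) := by
        rw [opNorm2_eq]; exact norm_nonneg _
      exact mul_le_mul_of_nonneg_left h2 hop
    rw [e2norm_smul, abs_of_pos (inv_pos.mpr hc)]
    have : opNorm2 (pinv R) * (σhat * Real.sqrt n) ≤ c := by
      calc opNorm2 (pinv R) * (σhat * Real.sqrt n)
          = σhat * opNorm2 (pinv R) * Real.sqrt n := by ring
        _ ≤ c := hscale
    calc c⁻¹ * e2norm (Matrix.vecMul w (pinv R)) ≤ c⁻¹ * c := by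
          apply mul_le_mul_of_nonneg_left (h3.trans this) (inv_pos.mpr hc).le
      _ = 1 := inv_mul_cancel₀ hc.ne'
  · rw [Matrix.smul_vecMul, Matrix.vecMul_vecMul, hpinv, Matrix.vecMul_one,
      smul_smul, mul_inv_cancel₀ hc.ne', one_smul]
end
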